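/- If S ⊆ ℤ + 1/2 has S⁺ and S⁻ both finite, and c(S) = |S⁺| − |S⁻|, then the shifted set {s − c(S) : s ∈ S} is the Maya diagram of a (unique) partition. -/

import Mathlib

/-!
STATEMENT 1. If S ⊆ ℤ + 1/2 has S⁺ and S⁻ both finite, and c(S) = |S⁺| − |S⁻|,
then the shifted set {s − c(S) : s ∈ S} is the Maya diagram of a unique partition.

Half-integers m + 1/2 are encoded by integers m (so shifting by the integer
charge c(S) is the same in both pictures).
-/

def IsPartitionFun (f : ℕ → ℕ) : Prop :=
  Antitone f ∧ ∃ N, ∀ n, N ≤ n → f n = 0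

def maya (f : ℕ → ℕ) : Set ℤ :=
  {m | ∃ n : ℕ, m = (f n : ℤ) - n - 1}

def Spos (S : Set ℤ) : Set ℤ := {m | m ∈ S ∧ 0 ≤ m}

def Sneg (S : Set ℤ) : Set ℤ := {m | m ∉ S ∧ m < 0}

/-- The charge of `S`, `c(S) = |S⁺| − |S⁻|`. -/
noncomputable def charge (S : Set ℤ) : ℤ := ((Spos S).ncard : ℤ) - ((Sneg S).ncard : ℤ)

/-- Two strictly antitone integer sequences with the same range are equal. -/
lemma strictAnti_eq_of_range_eq {a b : ℕ → ℤ} (ha : StrictAnti a) (hb : StrictAnti b)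
    (h : Set.range a = Set.range b) : a = b := by
  funext n
  induction n using Nat.strong_induction_on with
  | _ n ih =>
    have h1 : a n ∈ Set.range b := h ▸ Set.mem_range_self n
    have h2 : b n ∈ Set.range a := h.symm ▸ Set.mem_range_self n
    obtain ⟨m, hm⟩ := h1
    obtain ⟨m', hm'⟩ := h2
    have hab : a n ≤ b n := by
      rcases lt_or_ge m n with hmn | hmn
      · have e1 := ih m hmn
        have e2 := ha hmn
        omega
      · have := hb.antitone hmn
        omega
    have hba : b n ≤ a n := by
      rcases lt_or_ge m' n with hmn | hmn
      · have e1 := ih m' hmn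
        have e2 := hb hmn
        omega
      · have := ha.antitone hmn
        omega
    omega

lemma finA (S : Set ℤ) (hp : (Spos S).Finite) (d : ℤ) : {s | s ∈ S ∧ d ≤ s}.Finite := by
  apply (hp.union (Set.finite_Ico d 0)).subset
  rintro s ⟨hs, hd⟩
  rcases le_or_gt 0 s with h | h
  · exact Or.inl ⟨hs, h⟩
  · exact Or.inr ⟨hd, h⟩

lemma finB (S : Set ℤ) (hn : (Sneg S).Finite) (d : ℤ) : {m | m ∉ S ∧ m < d}.Finite := by
  apply (hn.union (Set.finite_Ico 0 d)).subset
  rintro m ⟨hm, hd⟩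
  rcases le_or_gt 0 m with h | h
  · exact Or.inr ⟨h, hd⟩
  · exact Or.inl ⟨hm, h⟩

lemma charge_step (S : Set ℤ) (hp : (Spos S).Finite) (hn : (Sneg S).Finite) (c : ℤ) :
    {s | s ∈ S ∧ c ≤ s}.ncard + {m | m ∉ S ∧ m < c + 1}.ncard
      = {s | s ∈ S ∧ c + 1 ≤ s}.ncard + {m | m ∉ S ∧ m < c}.ncard + 1 := by
  by_cases hc : c ∈ S
  · have e1 : {s | s ∈ S ∧ c ≤ s} = insert c {s | s ∈ S ∧ c + 1 ≤ s} := by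
      ext s
      simp only [Set.mem_setOf_eq, Set.mem_insert_iff]
      constructor
      · rintro ⟨h1, h2⟩
        rcases eq_or_lt_of_le h2 with h | h
        · exact Or.inl h.symm
        · exact Or.inr ⟨h1, by omega⟩
      · rintro (rfl | ⟨h1, h2⟩)
        · exact ⟨hc, le_refl _⟩
        · exact ⟨h1, by omega⟩
    have e2 : {m | m ∉ S ∧ m < c + 1} = {m | m ∉ S ∧ m < c} := by
      ext m
      simp only [Set.mem_setOf_eq]
      constructor
      · rintro ⟨h1, h2⟩
        have : m ≠ c := fun h => h1 (h ▸ hc)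
        exact ⟨h1, by omega⟩
      · rintro ⟨h1, h2⟩
        exact ⟨h1, by omega⟩
    rw [e1, e2, Set.ncard_insert_of_notMem (by simp) (finA S hp (c + 1))]
    omega
  · have e1 : {s | s ∈ S ∧ c ≤ s} = {s | s ∈ S ∧ c + 1 ≤ s} := by
      ext s
      simp only [Set.mem_setOf_eq]
      constructor
      · rintro ⟨h1, h2⟩
        have : s ≠ c := fun h => hc (h ▸ h1)
        exact ⟨h1, by omega⟩
      · rintro ⟨h1, h2⟩
        exact ⟨h1, by omega⟩
    have e2 : {m | m ∉ S ∧ m < c + 1} = insert c {m | m ∉ S ∧ m < c} := by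
      ext m
      simp only [Set.mem_setOf_eq, Set.mem_insert_iff]
      constructor
      · rintro ⟨h1, h2⟩
        rcases eq_or_ne m c with h | h
        · exact Or.inl h
        · exact Or.inr ⟨h1, by omega⟩
      · rintro (rfl | ⟨h1, h2⟩)
        · exact ⟨hc, by omega⟩
        · exact ⟨h1, by omega⟩
    rw [e1, e2, Set.ncard_insert_of_notMem (by simp) (finB S hn c)]
    omega

lemma charge_eq (S : Set ℤ) (hp : (Spos S).Finite) (hn : (Sneg S).Finite) (c : ℤ) :
    ({s | s ∈ S ∧ c ≤ s}.ncard : ℤ) - ({m | m ∉ S ∧ m < c}.ncard : ℤ) = charge S - c := by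
  induction c using Int.induction_on with
  | zero =>
    have e1 : {s | s ∈ S ∧ (0:ℤ) ≤ s} = Spos S := rfl
    have e2 : {m | m ∉ S ∧ m < (0:ℤ)} = Sneg S := rfl
    rw [e1, e2]
    simp [charge]
  | succ i ih =>
    have h := charge_step S hp hn i
    push_cast at h ih ⊢
    omega
  | pred i ih =>
    have h := charge_step S hp hn (-(i:ℤ) - 1)
    have e : (-(i:ℤ) - 1) + 1 = -(i:ℤ) := by ring
    rw [e] at h
    push_cast at h ih ⊢
    omega

noncomputable def enumT (T : Set ℤ) : ℕ → ℤ
  | 0 => sSup T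
  | n + 1 => sSup (T ∩ Set.Iio (enumT T n))

lemma exists_partitionFun (T : Set ℤ) (hp : (Spos T).Finite) (hn : (Sneg T).Finite)
    (hc : (Spos T).ncard = (Sneg T).ncard) :
    ∃ f : ℕ → ℕ, IsPartitionFun f ∧ maya f = T := by
  obtain ⟨b0, hb0⟩ := hn.bddBelow
  set b : ℤ := min b0 0 with hbdef
  have hb1 : b ≤ b0 := min_le_left _ _
  have hb2 : b ≤ 0 := min_le_right _ _
  have hTfull : ∀ m : ℤ, m < b → m ∈ T := by
    intro m hm
    by_contra h
    have : m ∈ Sneg T := ⟨h, by omega⟩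
    have := hb0 this
    omega
  have hTne : T.Nonempty := ⟨b - 1, hTfull _ (by omega)⟩
  have hbdd : BddAbove T := by
    obtain ⟨B, hB⟩ := hp.bddAbove
    refine ⟨max B 0, fun t ht => ?_⟩
    rcases le_or_gt 0 t with h | h
    · exact le_trans (hB ⟨ht, h⟩) (le_max_left _ _)
    · exact le_trans h.le (le_max_right _ _)
  have hne : ∀ x : ℤ, (T ∩ Set.Iio x).Nonempty := by
    intro x
    refine ⟨min b x - 1, hTfull _ ?_, ?_⟩
    · have := min_le_left b x; omega
    · simp only [Set.mem_Iio]
      have := min_le_right b x; omega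
  have hbdd2 : ∀ x : ℤ, BddAbove (T ∩ Set.Iio x) := fun x =>
    BddAbove.mono Set.inter_subset_left hbdd
  set e : ℕ → ℤ := enumT T with hedef
  have hesucc : ∀ n, e (n + 1) = sSup (T ∩ Set.Iio (e n)) := fun n => rfl
  have heT : ∀ n, e n ∈ T := by
    intro n
    cases n with
    | zero => exact Int.csSup_mem hTne hbdd
    | succ n => exact (Int.csSup_mem (hne _) (hbdd2 _)).1
  have hlt : ∀ n, e (n + 1) < e n := by
    intro n
    have := (Int.csSup_mem (hne (e n)) (hbdd2 (e n))).2
    exact this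
  have hSA : StrictAnti e := strictAnti_nat_of_succ_lt hlt
  have hub : ∀ n (t : ℤ), t ∈ T → (∀ j, j < n → t ≠ e j) → t ≤ e n := by
    intro n
    induction n with
    | zero => exact fun t ht _ => le_csSup hbdd ht
    | succ n ih =>
      intro t ht hne'
      have h1 : t ≤ e n := ih t ht (fun j hj => hne' j (by omega))
      have h2 : t ≠ e n := hne' n (by omega)
      exact le_csSup (hbdd2 _) ⟨ht, lt_of_le_of_ne h1 h2⟩
  have hmem : ∀ n, T ∩ Set.Ioi (e n) = e '' Set.Iio n := by
    intro n
    ext t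
    constructor
    · rintro ⟨ht, hgt⟩
      by_contra h
      have hne' : ∀ j, j < n → t ≠ e j := by
        intro j hj hje
        exact h ⟨j, hj, hje.symm⟩
      have := hub n t ht hne'
      simp only [Set.mem_Ioi] at hgt
      omega
    · rintro ⟨k, hk, rfl⟩
      exact ⟨heT k, hSA hk⟩
  have hcard : ∀ n, (T ∩ Set.Ioi (e n)).ncard = n := by
    intro n
    rw [hmem, Set.ncard_image_of_injective _ hSA.injective, ← Finset.coe_Iio,
      Set.ncard_coe_finset, Nat.card_Iio]
  have hsplit : ∀ x : ℤ, x < 0 →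
      (T ∩ Set.Ioi x).ncard = (Spos T).ncard + (T ∩ Set.Ioo x 0).ncard := by
    intro x hx
    have hs : T ∩ Set.Ioi x = Spos T ∪ (T ∩ Set.Ioo x 0) := by
      ext m
      simp only [Set.mem_inter_iff, Set.mem_Ioi, Set.mem_union, Set.mem_Ioo, Spos,
        Set.mem_setOf_eq]
      constructor
      · rintro ⟨hm, hxm⟩
        rcases le_or_gt 0 m with h | h
        · exact Or.inl ⟨hm, h⟩
        · exact Or.inr ⟨hm, hxm, h⟩
      · rintro (⟨hm, h⟩ | ⟨hm, h1, h2⟩)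
        · exact ⟨hm, by omega⟩
        · exact ⟨hm, h1⟩
    rw [hs, Set.ncard_union_eq ?_ hp (Set.Finite.subset (Set.finite_Ioo x 0)
      Set.inter_subset_right)]
    rw [Set.disjoint_left]
    rintro m ⟨_, h0⟩ ⟨_, _, h2⟩
    omega
  have hcompl : ∀ x : ℤ,
      (T ∩ Set.Ioo x 0).ncard + (Sneg T ∩ Set.Ioo x 0).ncard = (0 - x - 1).toNat := by
    intro x
    have h1 := Set.ncard_inter_add_ncard_diff_eq_ncard (Set.Ioo x 0) T (Set.finite_Ioo x 0)
    have e1 : Set.Ioo x 0 ∩ T = T ∩ Set.Ioo x 0 := Set.inter_comm _ _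
    have e2 : Set.Ioo x 0 \ T = Sneg T ∩ Set.Ioo x 0 := by
      ext m
      simp only [Set.mem_diff, Set.mem_Ioo, Set.mem_inter_iff, Sneg, Set.mem_setOf_eq]
      constructor
      · rintro ⟨⟨ha, hb⟩, hT⟩
        exact ⟨⟨hT, hb⟩, ha, hb⟩
      · rintro ⟨⟨hT, _⟩, ha, hb⟩
        exact ⟨⟨ha, hb⟩, hT⟩
    rw [e1, e2] at h1
    rw [h1, ← Finset.coe_Ioo, Set.ncard_coe_finset, Int.card_Ioo]
  have hsub : ∀ x : ℤ, (Sneg T ∩ Set.Ioo x 0).ncard ≤ (Sneg T).ncard :=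
    fun x => Set.ncard_le_ncard Set.inter_subset_left hn
  have hbound : ∀ n : ℕ, -(n:ℤ) - 1 ≤ e n := by
    intro n
    rcases le_or_gt 0 (e n) with h | h
    · omega
    · have h1 := hcard n
      have h2 := hsplit (e n) h
      have h3 := hcompl (e n)
      have h4 := hsub (e n)
      omega
  have hexact : ∀ n : ℕ, e n < b → e n = -(n:ℤ) - 1 := by
    intro n hnb
    have hneg : e n < 0 := by omega
    have hSsub : Sneg T ∩ Set.Ioo (e n) 0 = Sneg T := by
      apply Set.inter_eq_left.mpr
      rintro m ⟨hm1, hm2⟩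
      have := hb0 ⟨hm1, hm2⟩
      exact ⟨by omega, hm2⟩
    have h1 := hcard n
    have h2 := hsplit (e n) hneg
    have h3 := hcompl (e n)
    rw [hSsub] at h3
    omega
  have hdesc : ∀ n : ℕ, e n ≤ e 0 - n := by
    intro n
    induction n with
    | zero => simp
    | succ n ih =>
      have := hlt n
      push_cast
      omega
  refine ⟨fun n => (e n + n + 1).toNat, ⟨?_, ?_⟩, ?_⟩
  · apply antitone_nat_of_succ_le
    intro n
    have h1 := hlt n
    have h2 := hbound n
    push_cast
    omega
  · refine ⟨(e 0 - b).toNat + 1, fun n hNn => ?_⟩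
    have h1 : e n < b := by
      have := hdesc n
      omega
    have := hexact n h1
    show (e n + (n:ℤ) + 1).toNat = 0
    omega
  · ext m
    simp only [maya, Set.mem_setOf_eq]
    constructor
    · rintro ⟨n, rfl⟩
      have h2 := hbound n
      have : ((e n + n + 1).toNat : ℤ) - n - 1 = e n := by omega
      rw [this]
      exact heT n
    · intro hmT
      set n : ℕ := (e 0 - m).toNat + 1 with hndef
      have h1 : e n < m := by
        have := hdesc n
        omega
      have h2 : m ∈ e '' Set.Iio n := by
        rw [← hmem n]
        exact ⟨hmT, h1⟩
      obtain ⟨k, _, hk⟩ := h2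
      refine ⟨k, ?_⟩
      have := hbound k
      omega

theorem shifted_set_is_maya_diagram (S : Set ℤ)
    (hp : (Spos S).Finite) (hm : (Sneg S).Finite) :
    ∃! f : ℕ → ℕ, IsPartitionFun f ∧ maya f = (fun s => s - charge S) '' S := by
  set c : ℤ := charge S with hcdef
  set T : Set ℤ := (fun s => s - c) '' S with hTdef
  have hinj : Function.Injective (fun s : ℤ => s - c) := by
    intro a b h
    simpa using h
  have hTpos : Spos T = (fun s => s - c) '' {s | s ∈ S ∧ c ≤ s} := by
    ext m
    simp only [Spos, Set.mem_setOf_eq, hTdef, Set.mem_image]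
    constructor
    · rintro ⟨⟨s, hs, rfl⟩, h0⟩
      exact ⟨s, ⟨hs, by omega⟩, rfl⟩
    · rintro ⟨s, ⟨hs, hcs⟩, rfl⟩
      exact ⟨⟨s, hs, rfl⟩, by omega⟩
  have hTneg : Sneg T = (fun s : ℤ => s - c) '' {m | m ∉ S ∧ m < c} := by
    ext m
    simp only [Sneg, Set.mem_setOf_eq, hTdef, Set.mem_image]
    constructor
    · rintro ⟨hnT, hm0⟩
      refine ⟨m + c, ⟨fun h => hnT ⟨m + c, h, by ring⟩, by omega⟩, by ring⟩
    · rintro ⟨s, ⟨hsS, hsc⟩, rfl⟩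
      constructor
      · rintro ⟨s', hs', he⟩
        have : s' = s := by omega
        exact hsS (this ▸ hs')
      · omega
  have hTposFin : (Spos T).Finite := by
    rw [hTpos]; exact (finA S hp c).image _
  have hTnegFin : (Sneg T).Finite := by
    rw [hTneg]; exact (finB S hm c).image _
  have hch : (Spos T).ncard = (Sneg T).ncard := by
    have h1 : (Spos T).ncard = {s | s ∈ S ∧ c ≤ s}.ncard := by
      rw [hTpos, Set.ncard_image_of_injective _ hinj]
    have h2 : (Sneg T).ncard = {m | m ∉ S ∧ m < c}.ncard := by
      rw [hTneg, Set.ncard_image_of_injective _ hinj]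
    have h3 := charge_eq S hp hm c
    rw [← hcdef] at h3
    omega
  obtain ⟨f, hf, hmaya⟩ := exists_partitionFun T hTposFin hTnegFin hch
  refine ⟨f, ⟨hf, hmaya⟩, ?_⟩
  rintro g ⟨⟨hganti, Ng, hgN⟩, hgmaya⟩
  obtain ⟨hfanti, Nf, hfN⟩ := hf
  have key : ∀ (h : ℕ → ℕ), Antitone h →
      StrictAnti (fun n => (h n : ℤ) - n - 1) := by
    intro h hanti
    apply strictAnti_nat_of_succ_lt
    intro n
    have := hanti (show n ≤ n + 1 by omega)
    show (h (n+1) : ℤ) - (n+1) - 1 < (h n : ℤ) - n - 1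
    omega
  have hrange : ∀ (h : ℕ → ℕ), maya h = Set.range (fun n => (h n : ℤ) - n - 1) := by
    intro h
    ext m
    simp only [maya, Set.mem_setOf_eq, Set.mem_range]
    exact ⟨fun ⟨n, hn⟩ => ⟨n, hn.symm⟩, fun ⟨n, hn⟩ => ⟨n, hn.symm⟩⟩
  have heq : (fun n => (g n : ℤ) - n - 1) = (fun n => (f n : ℤ) - n - 1) := by
    apply strictAnti_eq_of_range_eq (key g hganti) (key f hfanti)
    rw [← hrange, ← hrange, hgmaya, hmaya]
  funext n
  have := congrFun heq n
  omega
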